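/- Enforcement Transparency: for every system p and every closed formula φ ∈ SHMLnf, if p satisfies φ then the instrumented system is strongly bisimilar to the original system, i.e., p ∈ ⟦φ⟧ implies ⟦φ⟧e[p] ∼ p. -/

import Mathlib

set_option autoImplicit false

/-- A labelled transition system over observable actions `Act`;
`none` plays the role of the silent action τ. -/
structure LTS (Act : Type) where
  S : Type
  Tr : S → Option Act → S → Prop

namespace Enf

open scoped Classical

variable {Act : Type}

/-- Zero or more silent steps. -/
def TauStar (L : LTS Act) : L.S → L.S → Prop :=
  Relation.ReflTransGen (fun p q => L.Tr p none q)

/-- The weak transition `p =a=> q`. -/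
def WStep (L : LTS Act) (p : L.S) (a : Act) (q : L.S) : Prop :=
  ∃ p₁ p₂, TauStar L p p₁ ∧ L.Tr p₁ (some a) p₂ ∧ TauStar L p₂ q

/-- Weak trace `p =t=> q`. -/
inductive WTrace (L : LTS Act) : L.S → List Act → L.S → Prop
  | nil {p q : L.S} : TauStar L p q → WTrace L p [] q
  | cons {p r q : L.S} {a : Act} {t : List Act} :
      WStep L p a r → WTrace L r t q → WTrace L p (a :: t) q

/-- SHML formulas: truth, falsehood, fixpoint variables, finite conjunctions,
modalities `[η]φ` (a guard set of actions together with an action-indexed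
continuation, representing the symbolic action and the matching substitutions),
and greatest fixpoints. -/
inductive Frm (Act : Type) : Type where
  | tt : Frm Act
  | ff : Frm Act
  | var : ℕ → Frm Act
  | conj : (n : ℕ) → (Fin n → Frm Act) → Frm Act
  | box : Set Act → (Act → Frm Act) → Frm Act
  | max : ℕ → Frm Act → Frm Act

namespace Frm

/-- Free fixpoint variables. -/
def fv : Frm Act → Set ℕ
  | .tt => ∅
  | .ff => ∅
  | .var X => {X}
  | .conj _ f => ⋃ i, fv (f i)
  | .box G k => ⋃ a ∈ G, fv (k a)
  | .max X φ => fv φ \ {X}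

def Closed (φ : Frm Act) : Prop := fv φ = ∅

/-- Substitution `φ[ψ/X]` (of a closed formula `ψ`). -/
def subst : Frm Act → ℕ → Frm Act → Frm Act
  | .tt, _, _ => .tt
  | .ff, _, _ => .ff
  | .var Y, X, ψ => if Y = X then ψ else .var Y
  | .conj n f, X, ψ => .conj n (fun i => subst (f i) X ψ)
  | .box G k, X, ψ => .box G (fun a => subst (k a) X ψ)
  | .max Y φ, X, ψ => if Y = X then .max Y φ else .max Y (subst φ X ψ)

/-- The normal-form fragment SHMLnf: conjunctions are conjunctions of
modalities with pairwise-disjoint guards, and each greatest fixpoint binds a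
variable occurring free in its body. -/
inductive IsNF : Frm Act → Prop
  | tt : IsNF .tt
  | ff : IsNF .ff
  | var (X : ℕ) : IsNF (.var X)
  | conj (n : ℕ) (G : Fin n → Set Act) (k : Fin n → Act → Frm Act)
      (hdisj : ∀ i j : Fin n, i ≠ j → ∀ a : Act, a ∈ G i → a ∉ G j)
      (hk : ∀ i : Fin n, ∀ a ∈ G i, IsNF (k i a)) :
      IsNF (.conj n fun i => .box (G i) (k i))
  | max (X : ℕ) (φ : Frm Act) (hfree : X ∈ fv φ) (hφ : IsNF φ) : IsNF (.max X φ)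

/-- `gvar X φ`: the variable `X` does not occur unguarded (i.e. outside every
modality) in `φ`. -/
def gvar (X : ℕ) : Frm Act → Prop
  | .tt => True
  | .ff => True
  | .var Y => Y ≠ X
  | .conj _ f => ∀ i, gvar X (f i)
  | .box _ _ => True
  | .max Y φ => Y = X ∨ gvar X φ

/-- A formula is guarded if every occurrence of a fixpoint variable lies
beneath a modality. -/
def Guarded : Frm Act → Prop
  | .tt => True
  | .ff => True
  | .var _ => True
  | .conj _ f => ∀ i, Guarded (f i)
  | .box G k => ∀ a ∈ G, Guarded (k a)
  | .max X φ => gvar X φ ∧ Guarded φ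

/-- Number of top-level greatest-fixpoint binders. -/
def topMax : Frm Act → ℕ
  | .max _ φ => topMax φ + 1
  | _ => 0

end Frm

/-- Denotational semantics of (possibly open) formulas, relative to an
environment mapping fixpoint variables to sets of states; `max` is interpreted
as the greatest fixpoint of the induced monotone map. -/
def sem (L : LTS Act) : Frm Act → (ℕ → Set L.S) → Set L.S
  | .tt, _ => Set.univ
  | .ff, _ => ∅
  | .var X, ρ => ρ X
  | .conj _ f, ρ => ⋂ i, sem L (f i) ρ
  | .box G k, ρ => {p | ∀ a ∈ G, ∀ q, WStep L p a q → q ∈ sem L (k a) ρ}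
  | .max X φ, ρ => ⋃₀ {S | S ⊆ sem L φ (Function.update ρ X S)}

/-- Semantics of closed formulas. -/
def Sem (L : LTS Act) (φ : Frm Act) : Set L.S := sem L φ fun _ => ∅

/-- Satisfiability. -/
def SatIn (L : LTS Act) (φ : Frm Act) : Prop := (Sem L φ).Nonempty

/-- The violation relation `p ⊨v^t φ`, defined as the least relation closed
under the given rules. -/
inductive Viol (L : LTS Act) : L.S → List Act → Frm Act → Prop
  | ff (p : L.S) : Viol L p [] .ff
  | conj {p : L.S} {t : List Act} {n : ℕ} {f : Fin n → Frm Act} (j : Fin n) :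
      Viol L p t (f j) → Viol L p t (.conj n f)
  | box {p p' : L.S} {t : List Act} {a : Act} {G : Set Act} {k : Act → Frm Act} :
      a ∈ G → WStep L p a p' → Viol L p' t (k a) → Viol L p (a :: t) (.box G k)
  | max {p : L.S} {t : List Act} {X : ℕ} {φ : Frm Act} :
      Viol L p t (Frm.subst φ X (.max X φ)) → Viol L p t (.max X φ)

/-- Transducers (enforcement monitors): identity, symbolic transformation
prefixes (a guard set of extended input actions, with `none` standing for the
insertion pattern •, an output per matched input, with `none` standing for τ,
and a continuation per matched input), finite selections, recursion, and
recursion variables. -/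
inductive Trn (Act : Type) : Type where
  | id : Trn Act
  | prf : Set (Option Act) → (Option Act → Option Act) → (Option Act → Trn Act) → Trn Act
  | sel : (n : ℕ) → (Fin n → Trn Act) → Trn Act
  | fix : ℕ → Trn Act → Trn Act
  | var : ℕ → Trn Act

namespace Trn

def tsubst : Trn Act → ℕ → Trn Act → Trn Act
  | .id, _, _ => .id
  | .prf G out k, x, s => .prf G out fun γ => tsubst (k γ) x s
  | .sel n f, x, s => .sel n fun i => tsubst (f i) x s
  | .fix y e, x, s => if y = x then .fix y e else .fix y (tsubst e x s)
  | .var y, x, s => if y = x then s else .var y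

end Trn

/-- Transducer transitions: labels are pairs (input, output) where input
`none` is the insertion pattern • and output `none` is τ. -/
inductive TStep : Trn Act → Option Act × Option Act → Trn Act → Prop
  | id (a : Act) : TStep .id (some a, some a) .id
  | prf {G : Set (Option Act)} {out : Option Act → Option Act}
      {k : Option Act → Trn Act} {γ : Option Act} (h : γ ∈ G) :
      TStep (.prf G out k) (γ, out γ) (k γ)
  | sel {n : ℕ} {f : Fin n → Trn Act} {l : Option Act × Option Act}
      {e' : Trn Act} (i : Fin n) (h : TStep (f i) l e') :
      TStep (.sel n f) l e'
  | fix {x : ℕ} {e : Trn Act} {l : Option Act × Option Act} {e' : Trn Act}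
      (h : TStep (Trn.tsubst e x (.fix x e)) l e') :
      TStep (.fix x e) l e'

/-- Instrumentation of a transducer on a system. -/
inductive IStep (L : LTS Act) : Trn Act × L.S → Option Act → Trn Act × L.S → Prop
  | trn {e e' : Trn Act} {p p' : L.S} {a : Act} {μ : Option Act} :
      L.Tr p (some a) p' → TStep e (some a, μ) e' → IStep L (e, p) μ (e', p')
  | asy {e : Trn Act} {p p' : L.S} :
      L.Tr p none p' → IStep L (e, p) none (e, p')
  | ins {e e' : Trn Act} {p : L.S} {μ : Option Act} :
      TStep e (none, μ) e' → IStep L (e, p) μ (e', p)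
  | ter {e : Trn Act} {p p' : L.S} {a : Act} :
      L.Tr p (some a) p' →
      (∀ μ e', ¬ TStep e (some a, μ) e') →
      (∀ μ e', ¬ TStep e (none, μ) e') →
      IStep L (e, p) (some a) (Trn.id, p')

/-- The LTS of monitored systems `e[p]`. -/
def instLTS (L : LTS Act) : LTS Act := ⟨Trn Act × L.S, IStep L⟩

/-- Strong bisimulations between (the state spaces of) two LTSs. -/
def IsBisim (L₁ L₂ : LTS Act) (R : L₁.S → L₂.S → Prop) : Prop :=
  ∀ s r, R s r →
    (∀ μ s', L₁.Tr s μ s' → ∃ r', L₂.Tr r μ r' ∧ R s' r') ∧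
    (∀ μ r', L₂.Tr r μ r' → ∃ s', L₁.Tr s μ s' ∧ R s' r')

/-- Strong bisimilarity. -/
def Bisim (L₁ L₂ : LTS Act) (s : L₁.S) (r : L₂.S) : Prop :=
  ∃ R, IsBisim L₁ L₂ R ∧ R s r

/-- The synthesis function `⟦-⟧e` from SHMLnf formulas to transducers:
formula variable `X` becomes monitor variable `X+1`; `tt` and `ff` become the
identity monitor; `max X.φ` becomes the corresponding recursive monitor; and a
normalised conjunction of modalities becomes a recursive selection (on the
fresh variable `0`) of symbolic prefixes that suppress (output τ, continue as
the recursion variable) actions whose continuation formula is `ff` and pass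
through all other matched actions, continuing with the synthesis of the
respective continuation formula. -/
noncomputable def synth : Frm Act → Trn Act
  | .tt => .id
  | .ff => .id
  | .var X => .var (X + 1)
  | .max X φ => .fix (X + 1) (synth φ)
  | .box G k =>
      .prf {γ | ∃ a ∈ G, γ = some a}
        (fun γ =>
          match γ with
          | some a => if k a = Frm.ff then none else some a
          | none => none)
        (fun γ =>
          match γ with
          | some a => if k a = Frm.ff then Trn.var 0 else synth (k a)
          | none => .id)
  | .conj n f => .fix 0 (.sel n fun i => synth (f i))

/-- Fuelled residual function (the fuel is consumed by fixpoint unfoldings;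
on guarded closed SHMLnf formulas `topMax φ + 1` units of fuel suffice). -/
noncomputable def afterFuel : ℕ → Frm Act → Act → Frm Act
  | 0, _, _ => .tt
  | n + 1, φ, a =>
    match φ with
    | .max X ψ => afterFuel n (Frm.subst ψ X (.max X ψ)) a
    | .conj m f =>
        if h : ∃ i : Fin m, ∃ G : Set Act, ∃ k : Act → Frm Act,
            f i = Frm.box G k ∧ a ∈ G
        then h.choose_spec.choose_spec.choose a
        else .tt
    | ψ => ψ

/-- The residual `after(φ, a)` of a guarded closed SHMLnf formula. -/
noncomputable def after (φ : Frm Act) (a : Act) : Frm Act :=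
  afterFuel (Frm.topMax φ + 1) φ a

/-- Satisfaction relations (the coinductive rules of `⊨s`). -/
def IsSatRel (L : LTS Act) (R : L.S → Frm Act → Prop) : Prop :=
  (∀ p, ¬ R p .ff) ∧
  (∀ p (n : ℕ) (f : Fin n → Frm Act), R p (.conj n f) → ∀ i, R p (f i)) ∧
  (∀ p (G : Set Act) (k : Act → Frm Act), R p (.box G k) →
      ∀ a ∈ G, ∀ q, WStep L p a q → R q (k a)) ∧
  (∀ p (X : ℕ) (φ : Frm Act), R p (.max X φ) → R p (Frm.subst φ X (.max X φ)))

/-- The largest satisfaction relation `⊨s`. -/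
def SatCo (L : LTS Act) (p : L.S) (φ : Frm Act) : Prop :=
  ∃ R, IsSatRel L R ∧ R p φ


/-! ### Auxiliary lemmas -/

section Aux

variable {L : LTS Act}

lemma sem_mono (φ : Frm Act) {ρ₁ ρ₂ : ℕ → Set L.S}
    (h : ∀ X, ρ₁ X ⊆ ρ₂ X) : sem L φ ρ₁ ⊆ sem L φ ρ₂ := by
  induction φ generalizing ρ₁ ρ₂ with
  | tt => simp [sem]
  | ff => simp [sem]
  | var X => exact h X
  | conj n f ih =>
    intro p hp
    simp only [sem, Set.mem_iInter] at hp ⊢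
    exact fun i => ih i h (hp i)
  | box G k ih =>
    intro p hp a ha q hq
    exact ih a h (hp a ha q hq)
  | max X φ ih =>
    intro p hp
    simp only [sem, Set.mem_sUnion, Set.mem_setOf_eq] at hp ⊢
    obtain ⟨S, hS, hpS⟩ := hp
    refine ⟨S, fun r hr => ?_, hpS⟩
    refine ih (fun Y => ?_) (hS hr)
    rcases eq_or_ne Y X with rfl | hY
    · simp
    · simp [Function.update_of_ne hY]; exact h Y

lemma sem_congr (φ : Frm Act) {ρ₁ ρ₂ : ℕ → Set L.S}
    (h : ∀ X ∈ Frm.fv φ, ρ₁ X = ρ₂ X) : sem L φ ρ₁ = sem L φ ρ₂ := by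
  induction φ generalizing ρ₁ ρ₂ with
  | tt => rfl
  | ff => rfl
  | var X => exact h X (by simp [Frm.fv])
  | conj n f ih =>
    simp only [sem]
    exact Set.iInter_congr fun i =>
      ih i fun X hX => h X (by simp only [Frm.fv]; exact Set.mem_iUnion.2 ⟨i, hX⟩)
  | box G k ih =>
    ext p
    simp only [sem, Set.mem_setOf_eq]
    constructor <;> intro hp a ha q hq
    · rw [← ih a fun X hX => h X (by
        simp only [Frm.fv]; exact Set.mem_iUnion.2 ⟨a, Set.mem_iUnion.2 ⟨ha, hX⟩⟩)]
      exact hp a ha q hq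
    · rw [ih a fun X hX => h X (by
        simp only [Frm.fv]; exact Set.mem_iUnion.2 ⟨a, Set.mem_iUnion.2 ⟨ha, hX⟩⟩)]
      exact hp a ha q hq
  | max X φ ih =>
    have key : ∀ S : Set L.S,
        sem L φ (Function.update ρ₁ X S) = sem L φ (Function.update ρ₂ X S) := by
      intro S
      refine ih fun Y hY => ?_
      rcases eq_or_ne Y X with rfl | hYX
      · simp
      · simp only [Function.update_of_ne hYX]
        exact h Y (by simp only [Frm.fv, Set.mem_diff, Set.mem_singleton_iff]; exact ⟨hY, hYX⟩)
    simp only [sem, key]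

lemma sem_closed (φ : Frm Act) (hc : φ.Closed) (ρ₁ ρ₂ : ℕ → Set L.S) :
    sem L φ ρ₁ = sem L φ ρ₂ :=
  sem_congr φ fun X hX => by rw [Frm.Closed] at hc; rw [hc] at hX; exact absurd hX (Set.notMem_empty X)

lemma sem_subst (φ ψ : Frm Act) (X : ℕ) (hψ : ψ.Closed) (ρ : ℕ → Set L.S) :
    sem L (Frm.subst φ X ψ) ρ = sem L φ (Function.update ρ X (sem L ψ ρ)) := by
  induction φ generalizing ρ with
  | tt => rfl
  | ff => rfl
  | var Y =>
    rcases eq_or_ne Y X with rfl | hY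
    · simp [Frm.subst, sem]
    · simp [Frm.subst, hY, sem, Function.update_of_ne hY]
  | conj n f ih =>
    simp only [Frm.subst, sem]
    exact Set.iInter_congr fun i => ih i ρ
  | box G k ih =>
    ext p
    simp only [Frm.subst, sem, Set.mem_setOf_eq]
    constructor <;> intro hp a ha q hq
    · rw [← ih a ρ]; exact hp a ha q hq
    · rw [ih a ρ]; exact hp a ha q hq
  | max Y φ ih =>
    rcases eq_or_ne Y X with rfl | hY
    · simp only [Frm.subst, if_pos rfl]
      refine sem_congr _ fun Z hZ => ?_
      simp [Frm.fv] at hZ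
      rw [Function.update_of_ne hZ.2]
    · have key : ∀ S : Set L.S,
          sem L (Frm.subst φ X ψ) (Function.update ρ Y S) =
            sem L φ (Function.update (Function.update ρ X (sem L ψ ρ)) Y S) := by
        intro S
        rw [ih (Function.update ρ Y S)]
        rw [sem_closed ψ hψ (Function.update ρ Y S) ρ]
        rw [Function.update_comm (Ne.symm hY)]
      simp only [Frm.subst, if_neg hY, sem, key]

lemma Sem_max_unfold {X : ℕ} {φ : Frm Act} (hc : Frm.Closed (.max X φ)) :
    Sem L (.max X φ) ⊆ Sem L (Frm.subst φ X (.max X φ)) := by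
  intro p hp
  have hp' := hp
  simp only [Sem, sem, Set.mem_sUnion, Set.mem_setOf_eq] at hp'
  obtain ⟨S, hS, hpS⟩ := hp'
  have hSsub : S ⊆ Sem L (.max X φ) := fun r hr => by
    simp only [Sem, sem, Set.mem_sUnion, Set.mem_setOf_eq]
    exact ⟨S, hS, hr⟩
  simp only [Sem]
  rw [sem_subst φ _ X hc]
  refine sem_mono φ (fun Y => ?_) (hS hpS)
  rcases eq_or_ne Y X with rfl | hY
  · simpa [Sem] using hSsub
  · simp [Function.update_of_ne hY]

lemma fv_subst_subset (φ ψ : Frm Act) (X : ℕ) :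
    Frm.fv (Frm.subst φ X ψ) ⊆ (Frm.fv φ \ {X}) ∪ Frm.fv ψ := by
  induction φ with
  | tt => simp [Frm.subst, Frm.fv]
  | ff => simp [Frm.subst, Frm.fv]
  | var Y =>
    rcases eq_or_ne Y X with rfl | hY
    · simp [Frm.subst, Frm.fv]
    · simp only [Frm.subst, if_neg hY, Frm.fv]
      intro Z hZ
      simp only [Set.mem_singleton_iff] at hZ
      subst hZ
      exact Or.inl ⟨rfl, hY⟩
  | conj n f ih =>
    simp only [Frm.subst, Frm.fv]
    refine Set.iUnion_subset fun i => (ih i).trans ?_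
    intro Z hZ
    rcases hZ with ⟨hZ1, hZ2⟩ | hZ
    · exact Or.inl ⟨Set.mem_iUnion.2 ⟨i, hZ1⟩, hZ2⟩
    · exact Or.inr hZ
  | box G k ih =>
    simp only [Frm.subst, Frm.fv]
    refine Set.iUnion_subset fun a => Set.iUnion_subset fun ha => (ih a).trans ?_
    intro Z hZ
    rcases hZ with ⟨hZ1, hZ2⟩ | hZ
    · exact Or.inl ⟨Set.mem_iUnion.2 ⟨a, Set.mem_iUnion.2 ⟨ha, hZ1⟩⟩, hZ2⟩
    · exact Or.inr hZ
  | max Y φ ih =>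
    rcases eq_or_ne Y X with rfl | hY
    · simp only [Frm.subst, if_pos rfl, Frm.fv]
      intro Z hZ
      exact Or.inl ⟨hZ, hZ.2⟩
    · simp only [Frm.subst, if_neg hY, Frm.fv]
      intro Z hZ
      rcases ih hZ.1 with ⟨h1, h2⟩ | h1
      · exact Or.inl ⟨⟨h1, hZ.2⟩, h2⟩
      · exact Or.inr h1

lemma fv_subset_subst (φ ψ : Frm Act) (X : ℕ) :
    Frm.fv φ \ {X} ⊆ Frm.fv (Frm.subst φ X ψ) := by
  induction φ with
  | tt => simp [Frm.fv]
  | ff => simp [Frm.fv]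
  | var Y =>
    intro Z hZ
    simp only [Frm.fv, Set.mem_diff, Set.mem_singleton_iff] at hZ
    obtain ⟨rfl, hne⟩ := hZ
    simp [Frm.subst, hne, Frm.fv]
  | conj n f ih =>
    intro Z hZ
    simp only [Frm.fv, Set.mem_diff, Set.mem_iUnion] at hZ
    obtain ⟨⟨i, hi⟩, hne⟩ := hZ
    simp only [Frm.subst, Frm.fv, Set.mem_iUnion]
    exact ⟨i, ih i ⟨hi, hne⟩⟩
  | box G k ih =>
    intro Z hZ
    simp only [Frm.fv, Set.mem_diff, Set.mem_iUnion] at hZ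
    obtain ⟨⟨a, ha, hi⟩, hne⟩ := hZ
    simp only [Frm.subst, Frm.fv, Set.mem_iUnion]
    exact ⟨a, ha, ih a ⟨hi, hne⟩⟩
  | max Y φ ih =>
    intro Z hZ
    simp only [Frm.fv, Set.mem_diff, Set.mem_singleton_iff] at hZ
    obtain ⟨⟨h1, h2⟩, hne⟩ := hZ
    rcases eq_or_ne Y X with rfl | hY
    · simp only [Frm.subst, if_pos rfl, Frm.fv]
      exact ⟨h1, h2⟩
    · simp only [Frm.subst, if_neg hY, Frm.fv]
      exact ⟨ih ⟨h1, hne⟩, h2⟩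

lemma closed_subst {φ ψ : Frm Act} {X : ℕ} (hφ : Frm.fv φ ⊆ {X}) (hψ : ψ.Closed) :
    Frm.Closed (Frm.subst φ X ψ) := by
  rw [Frm.Closed, ← Set.subset_empty_iff]
  refine (fv_subst_subset φ ψ X).trans ?_
  rw [Frm.Closed] at hψ
  rw [hψ]
  intro Z hZ
  rcases hZ with ⟨h1, h2⟩ | h
  · exact h2 (hφ h1)
  · exact h

lemma closed_max_unfold {X : ℕ} {φ : Frm Act} (hc : Frm.Closed (.max X φ)) :
    Frm.Closed (Frm.subst φ X (.max X φ)) := by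
  refine closed_subst ?_ hc
  rw [Frm.Closed, Frm.fv, Set.diff_eq_empty] at hc
  exact hc

end Aux
section Aux2

variable {L : LTS Act}

lemma subst_eq_ff_iff {ρ ψ : Frm Act} {X : ℕ} (hψ : ψ ≠ .ff) :
    Frm.subst ρ X ψ = .ff ↔ ρ = .ff := by
  cases ρ with
  | tt => simp [Frm.subst]
  | ff => simp [Frm.subst]
  | var Y =>
    simp only [Frm.subst]
    split
    · simp [hψ]
    · simp
  | conj n f => simp [Frm.subst]
  | box G k => simp [Frm.subst]
  | max Y φ' =>
    simp only [Frm.subst]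
    split <;> simp

lemma isNF_subst {φ ψ : Frm Act} {X : ℕ} (hφ : Frm.IsNF φ) (hψ : Frm.IsNF ψ) :
    Frm.IsNF (Frm.subst φ X ψ) := by
  induction hφ with
  | tt => exact Frm.IsNF.tt
  | ff => exact Frm.IsNF.ff
  | var Y =>
    simp only [Frm.subst]
    split
    · exact hψ
    · exact Frm.IsNF.var Y
  | conj n G k hdisj hk ih =>
    exact Frm.IsNF.conj n G (fun i a => Frm.subst (k i a) X ψ) hdisj
      (fun i a ha => ih i a ha)
  | max Y φ' hfree hφ' ih =>
    simp only [Frm.subst]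
    split
    · exact Frm.IsNF.max Y φ' hfree hφ'
    · rename_i hne
      exact Frm.IsNF.max Y _ (fv_subset_subst φ' ψ X ⟨hfree, hne⟩) ih

lemma not_isNF_box (G : Set Act) (k : Act → Frm Act) : ¬ Frm.IsNF (.box G k) := by
  intro h
  cases h

lemma synth_ne_ff_aux : True := trivial

lemma tsubst_synth_zero {φ : Frm Act} (hφ : Frm.IsNF φ) (s : Trn Act) :
    Trn.tsubst (synth φ) 0 s = synth φ := by
  induction hφ with
  | tt => rfl
  | ff => rfl
  | var Y => simp [synth, Trn.tsubst]
  | conj n G k hdisj hk ih => simp [synth, Trn.tsubst]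
  | max Y φ' hfree hφ' ih => simp [synth, Trn.tsubst, ih]

lemma synth_subst (φ ψ : Frm Act) (X : ℕ) (hψ : ψ ≠ .ff) :
    Trn.tsubst (synth φ) (X + 1) (synth ψ) = synth (Frm.subst φ X ψ) := by
  induction φ with
  | tt => rfl
  | ff => rfl
  | var Y =>
    rcases eq_or_ne Y X with rfl | hY
    · simp [synth, Trn.tsubst, Frm.subst]
    · simp [synth, Trn.tsubst, Frm.subst, hY]
  | conj n f ih =>
    simp only [synth, Trn.tsubst, if_neg (Nat.zero_ne_add_one X), Frm.subst]
    congr 1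
    congr 1
    funext i
    exact ih i
  | box G k ih =>
    simp only [synth, Frm.subst, Trn.tsubst]
    congr 1
    · funext γ
      cases γ with
      | none => rfl
      | some a =>
        dsimp only
        by_cases h : k a = .ff
        · simp [h, Frm.subst]
        · rw [if_neg h, if_neg (fun hc => h ((subst_eq_ff_iff hψ).1 hc))]
    · funext γ
      cases γ with
      | none => rfl
      | some a =>
        dsimp only
        by_cases h : k a = .ff
        · rw [if_pos h, if_pos ((subst_eq_ff_iff hψ).2 h)]
          simp [Trn.tsubst]
        · rw [if_neg h, if_neg (fun hc => h ((subst_eq_ff_iff hψ).1 hc)), ih a]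
  | max Y φ' ih =>
    rcases eq_or_ne Y X with rfl | hY
    · simp [synth, Trn.tsubst, Frm.subst]
    · simp only [synth, Trn.tsubst, Frm.subst, if_neg hY,
        if_neg (fun h : Y + 1 = X + 1 => hY (Nat.succ_injective h))]
      rw [ih]

end Aux2
section Aux3

variable {L : LTS Act}

lemma WStep.tau_left {q q' q₂ : L.S} {a : Act} (h : L.Tr q none q')
    (hw : WStep L q' a q₂) : WStep L q a q₂ := by
  obtain ⟨p₁, p₂, h1, h2, h3⟩ := hw
  exact ⟨p₁, p₂, Relation.ReflTransGen.head h h1, h2, h3⟩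

lemma WStep.single {q q' : L.S} {a : Act} (h : L.Tr q (some a) q') : WStep L q a q' :=
  ⟨q, q', Relation.ReflTransGen.refl, h, Relation.ReflTransGen.refl⟩

/-- Environments closed under silent steps. -/
def TauClosedEnv (L : LTS Act) (ρ : ℕ → Set L.S) : Prop :=
  ∀ X q q', L.Tr q none q' → q ∈ ρ X → q' ∈ ρ X

lemma sem_tau (φ : Frm Act) :
    ∀ ρ : ℕ → Set L.S, TauClosedEnv L ρ →
      ∀ q q', L.Tr q none q' → q ∈ sem L φ ρ → q' ∈ sem L φ ρ := by
  induction φ with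
  | tt => intro ρ _ q q' _ _; simp [sem]
  | ff => intro ρ _ q q' _ h; simp [sem] at h
  | var X => intro ρ hρ q q' h hq; exact hρ X q q' h hq
  | conj n f ih =>
    intro ρ hρ q q' h hq
    simp only [sem, Set.mem_iInter] at hq ⊢
    exact fun i => ih i ρ hρ q q' h (hq i)
  | box G k ih =>
    intro ρ hρ q q' h hq
    intro a ha q₂ hw
    exact hq a ha q₂ (WStep.tau_left h hw)
  | max X φ ih =>
    intro ρ hρ q q' h hq
    simp only [sem, Set.mem_sUnion, Set.mem_setOf_eq] at hq ⊢
    obtain ⟨S, hS, hqS⟩ := hq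
    refine ⟨{r' | ∃ r ∈ S, TauStar L r r'}, ?_, ⟨q, hqS, Relation.ReflTransGen.single h⟩⟩
    have hS' : S ⊆ {r' | ∃ r ∈ S, TauStar L r r'} :=
      fun r hr => ⟨r, hr, Relation.ReflTransGen.refl⟩
    have hτ : TauClosedEnv L (Function.update ρ X {r' | ∃ r ∈ S, TauStar L r r'}) := by
      intro Y u u' hu huY
      rcases eq_or_ne Y X with rfl | hY
      · simp only [Function.update_self] at huY ⊢
        obtain ⟨r, hr, hru⟩ := huY
        exact ⟨r, hr, hru.tail hu⟩
      · simp only [Function.update_of_ne hY] at huY ⊢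
        exact hρ Y u u' hu huY
    intro r' hr'
    obtain ⟨r, hr, hrr'⟩ := hr'
    have hbase : r ∈ sem L φ (Function.update ρ X {r' | ∃ r ∈ S, TauStar L r r'}) := by
      refine sem_mono φ (fun Y => ?_) (hS hr)
      rcases eq_or_ne Y X with rfl | hY
      · simpa using hS'
      · simp [Function.update_of_ne hY]
    clear hr
    induction hrr' with
    | refl => exact hbase
    | tail _ hstep ih2 => exact ih _ hτ _ _ hstep ih2

lemma Sem_tau {φ : Frm Act} {q q' : L.S} (h : L.Tr q none q') (hq : q ∈ Sem L φ) :
    q' ∈ Sem L φ :=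
  sem_tau φ _ (fun X u u' _ hu => absurd hu (Set.notMem_empty u)) q q' h hq

end Aux3
section Aux4

variable {L : LTS Act}

lemma synth_eq_id {ψ : Frm Act} (h : synth ψ = .id) : ψ = .tt ∨ ψ = .ff := by
  cases ψ with
  | tt => exact Or.inl rfl
  | ff => exact Or.inr rfl
  | var Y => simp [synth] at h
  | conj n f => simp [synth] at h
  | box G k => rw [synth] at h; cases h
  | max Y φ' => simp [synth] at h

lemma synth_eq_fix {ψ : Frm Act} {x : ℕ} {b : Trn Act} (h : synth ψ = .fix x b) :
    (∃ X φ', ψ = .max X φ' ∧ x = X + 1 ∧ b = synth φ') ∨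
      (∃ n f, ψ = .conj n f ∧ x = 0 ∧ b = .sel n fun i => synth (f i)) := by
  cases ψ with
  | tt => simp [synth] at h
  | ff => simp [synth] at h
  | var Y => simp [synth] at h
  | conj n f =>
    simp only [synth, Trn.fix.injEq] at h
    exact Or.inr ⟨n, f, rfl, h.1.symm, h.2.symm⟩
  | box G k => rw [synth] at h; cases h
  | max Y φ' =>
    simp only [synth, Trn.fix.injEq] at h
    exact Or.inl ⟨Y, φ', rfl, h.1.symm, h.2.symm⟩

lemma synth_ne_prf {ψ : Frm Act} (hnf : ψ.IsNF) {G : Set (Option Act)}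
    {out : Option Act → Option Act} {k : Option Act → Trn Act}
    (h : synth ψ = .prf G out k) : False := by
  cases ψ with
  | tt => simp [synth] at h
  | ff => simp [synth] at h
  | var Y => simp [synth] at h
  | conj n f => simp [synth] at h
  | box G' k' => cases hnf
  | max Y φ' => simp [synth] at h

lemma synth_ne_sel {ψ : Frm Act} {n : ℕ} {f : Fin n → Trn Act}
    (h : synth ψ = .sel n f) : False := by
  cases ψ with
  | tt => simp [synth] at h
  | ff => simp [synth] at h
  | var Y => simp [synth] at h
  | conj n' f' => simp [synth] at h
  | box G k => rw [synth] at h; cases h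
  | max Y φ' => simp [synth] at h

lemma synth_ne_var {ψ : Frm Act} (hc : ψ.Closed) {x : ℕ} (h : synth ψ = .var x) : False := by
  cases ψ with
  | var Y =>
    rw [Frm.Closed, Frm.fv] at hc
    exact absurd hc (Set.singleton_ne_empty Y)
  | tt => simp [synth] at h
  | ff => simp [synth] at h
  | conj n f => simp [synth] at h
  | box G k => rw [synth] at h; cases h
  | max Y φ' => simp [synth] at h

lemma closed_conj_box {n : ℕ} {G : Fin n → Set Act} {k : Fin n → Act → Frm Act}
    (hc : Frm.Closed (.conj n fun i => .box (G i) (k i))) {i : Fin n} {a : Act}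
    (ha : a ∈ G i) : Frm.Closed (k i a) := by
  rw [Frm.Closed, Frm.fv] at hc
  rw [Set.iUnion_eq_empty] at hc
  have := hc i
  rw [Frm.fv, Set.iUnion_eq_empty] at this
  have := this a
  rw [Set.iUnion_eq_empty] at this
  exact this ha

lemma Sem_conj_box {n : ℕ} {G : Fin n → Set Act} {k : Fin n → Act → Frm Act}
    {q : L.S} (hq : q ∈ Sem L (.conj n fun i => .box (G i) (k i))) {i : Fin n} {a : Act}
    (ha : a ∈ G i) {q₀ : L.S} (hw : WStep L q a q₀) : q₀ ∈ Sem L (k i a) := by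
  simp only [Sem, sem, Set.mem_iInter] at hq
  exact hq i a ha q₀ hw

end Aux4
section Main

variable {L : LTS Act}

lemma tstep_synth {e e' : Trn Act} {l : Option Act × Option Act}
    (h : TStep e l e') :
    ∀ ψ : Frm Act, ψ.Closed → ψ.IsNF → e = synth ψ →
    ∀ q : L.S, q ∈ Sem L ψ →
    ∃ a : Act, l.1 = some a ∧
      ∀ q₀ : L.S, WStep L q a q₀ →
        l.2 = some a ∧
          ∃ ψ' : Frm Act, e' = synth ψ' ∧ ψ'.Closed ∧ ψ'.IsNF ∧ q₀ ∈ Sem L ψ' := by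
  induction h with
  | id a =>
    intro ψ hc hnf heq q hq
    rcases synth_eq_id heq.symm with rfl | rfl
    · exact ⟨a, rfl, fun q₀ _ =>
        ⟨rfl, ⟨.tt, rfl, rfl, Frm.IsNF.tt, Set.mem_univ q₀⟩⟩⟩
    · exact absurd hq (Set.notMem_empty q)
  | prf hγ =>
    intro ψ hc hnf heq q hq
    exact (synth_ne_prf hnf heq.symm).elim
  | sel i hsub ih =>
    intro ψ hc hnf heq q hq
    exact (synth_ne_sel heq.symm).elim
  | fix hsub ih =>
    intro ψ hc hnf heq q hq
    rcases synth_eq_fix heq.symm with ⟨X, φ', rfl, rfl, rfl⟩ | ⟨n, f, rfl, rfl, rfl⟩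
    · -- greatest fixpoint: unfold
      have hne : (Frm.max X φ') ≠ Frm.ff := fun hcon => by cases hcon
      cases hnf with
      | max X φ' hfree hφ' =>
        exact ih _ (closed_max_unfold hc) (isNF_subst hφ' (Frm.IsNF.max X φ' hfree hφ'))
          (synth_subst φ' (Frm.max X φ') X hne) q (Sem_max_unfold hc hq)
    · -- conjunction of boxes
      clear ih
      cases hnf with
      | conj n G k hdisj hk =>
        simp only [Trn.tsubst] at hsub
        cases hsub with
        | sel i hsub2 =>
          simp only [synth, Trn.tsubst] at hsub2
          cases hsub2 with
          | prf hγ =>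
            obtain ⟨a, ha, rfl⟩ := hγ
            refine ⟨a, rfl, fun q₀ hw => ?_⟩
            have hka : q₀ ∈ Sem L (k i a) := Sem_conj_box hq ha hw
            have hne : k i a ≠ .ff := by
              intro hff
              rw [hff] at hka
              exact absurd hka (Set.notMem_empty q₀)
            constructor
            · show (match (some a : Option Act) with
                | some a => if k i a = Frm.ff then none else some a
                | none => none) = some a
              dsimp only
              rw [if_neg hne]
            · refine ⟨k i a, ?_, closed_conj_box hc ha, hk i a ha, hka⟩
              show Trn.tsubst
                (match (some a : Option Act) with
                  | some a => if k i a = Frm.ff then Trn.var 0 else synth (k i a)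
                  | none => Trn.id) 0 _ = synth (k i a)
              dsimp only
              rw [if_neg hne]
              exact tsubst_synth_zero (hk i a ha) _

end Main
/-- Enforcement Transparency: for every system p and closed
φ ∈ SHMLnf, if p ∈ ⟦φ⟧ then ⟦φ⟧e[p] ∼ p. -/
theorem enforcement_transparency (Act : Type) (L : LTS Act) (φ : Frm Act)
    (hclosed : φ.Closed) (hnf : φ.IsNF) (p : L.S) (hsat : p ∈ Sem L φ) :
    Bisim (instLTS L) L (synth φ, p) p := by
  classical
  refine ⟨fun s r => s.2 = r ∧
      (s.1 = Trn.id ∨ ∃ ψ : Frm Act, s.1 = synth ψ ∧ ψ.Closed ∧ ψ.IsNF ∧ r ∈ Sem L ψ),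
    ?_, rfl, Or.inr ⟨φ, rfl, hclosed, hnf, hsat⟩⟩
  rintro ⟨e, q⟩ r ⟨rfl, hinv⟩
  dsimp only at hinv ⊢
  constructor
  · -- forward: instrumented steps are matched by the system
    intro μ s' hstep
    cases hstep with
    | trn htr htstep =>
      rename_i e₀ p' a
      rcases hinv with rfl | ⟨ψ, rfl, hc, hn, hq⟩
      · cases htstep
        exact ⟨p', htr, rfl, Or.inl rfl⟩
      · obtain ⟨a', ha', hres⟩ :=
          tstep_synth (L := L) htstep ψ hc hn rfl q hq
        obtain rfl : a = a' := by injection ha'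
        obtain ⟨hμ, ψ', he', hc', hn', hq'⟩ := hres p' (WStep.single htr)
        subst hμ
        exact ⟨p', htr, rfl, Or.inr ⟨ψ', he', hc', hn', hq'⟩⟩
    | asy htr =>
      rename_i p'
      refine ⟨p', htr, rfl, ?_⟩
      rcases hinv with rfl | ⟨ψ, rfl, hc, hn, hq⟩
      · exact Or.inl rfl
      · exact Or.inr ⟨ψ, rfl, hc, hn, Sem_tau htr hq⟩
    | ins htstep =>
      rcases hinv with rfl | ⟨ψ, rfl, hc, hn, hq⟩
      · cases htstep
      · obtain ⟨a', ha', -⟩ := tstep_synth (L := L) htstep ψ hc hn rfl q hq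
        cases ha'
    | ter htr hno hnoins =>
      rename_i p' a
      exact ⟨p', htr, rfl, Or.inl rfl⟩
  · -- backward: system steps are matched by the instrumented system
    intro μ r' htr
    cases μ with
    | none =>
      refine ⟨(e, r'), IStep.asy htr, rfl, ?_⟩
      rcases hinv with rfl | ⟨ψ, rfl, hc, hn, hq⟩
      · exact Or.inl rfl
      · exact Or.inr ⟨ψ, rfl, hc, hn, Sem_tau htr hq⟩
    | some a =>
      rcases hinv with rfl | ⟨ψ, rfl, hc, hn, hq⟩
      · exact ⟨(Trn.id, r'), IStep.trn htr (TStep.id a), rfl, Or.inl rfl⟩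
      · by_cases hex : ∃ μ' e₀, TStep (synth ψ) (some a, μ') e₀
        · obtain ⟨μ', e₀, hts⟩ := hex
          obtain ⟨a', ha', hres⟩ := tstep_synth (L := L) hts ψ hc hn rfl q hq
          obtain rfl : a = a' := by injection ha'
          obtain ⟨hμ, ψ', he', hc', hn', hq'⟩ := hres r' (WStep.single htr)
          subst hμ
          exact ⟨(e₀, r'), IStep.trn htr hts, rfl, Or.inr ⟨ψ', he', hc', hn', hq'⟩⟩
        · push_neg at hex
          have hins : ∀ μ' e₀, ¬ TStep (synth ψ) (none, μ') e₀ := by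
            intro μ' e₀ hts
            obtain ⟨a', ha', -⟩ := tstep_synth (L := L) hts ψ hc hn rfl q hq
            cases ha'
          exact ⟨(Trn.id, r'), IStep.ter htr (fun μ' e₀ => hex μ' e₀) hins, rfl, Or.inl rfl⟩

end Enf
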